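/- arXiv:1401.1894 — 2 statements merged into one kernel-verified Lean document; each statement's English description precedes it below -/
import Mathlib

section
/- Let 1 ≤ μ < ω₁. If S ∈ Δ⁰_{μ+1}, then S is μth-order guessable; moreover, taking (A_i) as in Kuratowski's lemma with S = ⋃_n ⋂_{m≥n} A_m = ⋂_n ⋃_{m≥n} A_m, the guesser G(a₀,…,a_m) = a_m based on (A₀, A₁, …) guesses S. -/
open Filter Topology Classical

/-- The initial segment `f↾n` of an infinite sequence. -/
def res (f : ℕ → ℕ) (n : ℕ) : List ℕ := List.ofFn (fun i : Fin n => f i)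

/-- `[X]`: the set of infinite sequences all of whose finite initial segments lie in `X`. -/
def seqsIn (X : Set (List ℕ)) : Set (ℕ → ℕ) := {f | ∀ n, res f n ∈ X}

/-- The simplified remainder `S_α`. -/
noncomputable def SRem (S : Set (ℕ → ℕ)) (α : Ordinal.{0}) : Set (List ℕ) :=
  Ordinal.limitRecOn α Set.univ
    (fun _ prev => {x | x ∈ prev ∧ ∃ f g : ℕ → ℕ,
      f ∈ seqsIn prev ∧ g ∈ seqsIn prev ∧ res f x.length = x ∧ res g x.length = x ∧
      f ∈ S ∧ g ∉ S})
    (fun _ _ ih => ⋂ (β : Ordinal.{0}) (h : β < _), ih β h)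

/-- Wadge's remainder `Rm_μ(A,B)`. -/
noncomputable def Rm (A B : Set (ℕ → ℕ)) (μ : Ordinal.{0}) : Set (ℕ → ℕ) :=
  if μ = 0 then Set.univ
  else ⋂ (ν : {ν : Ordinal.{0} // ν < μ}),
    closure (Rm A B ν.1 ∩ A) ∩ closure (Rm A B ν.1 ∩ B)
termination_by μ
decreasing_by exact ν.2

/-- The least ordinal at which the simplified remainders stabilize. -/
noncomputable def alphaS (S : Set (ℕ → ℕ)) : Ordinal.{0} :=
  sInf {α | SRem S α = SRem S (α + 1)}

/-- `S_∞`, the stable value of the simplified remainders. -/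
noncomputable def Sinf (S : Set (ℕ → ℕ)) : Set (List ℕ) := SRem S (alphaS S)

/-- `β(σ)`: the least ordinal `γ` with `σ ∉ S_γ`. -/
noncomputable def betaOf (S : Set (ℕ → ℕ)) (σ : List ℕ) : Ordinal.{0} :=
  sInf {γ | σ ∉ SRem S γ}

/-- `G` guesses `S`. -/
def Guesses (G : List ℕ → Bool) (S : Set (ℕ → ℕ)) : Prop :=
  ∀ f : ℕ → ℕ, ∀ᶠ n in atTop, (G (res f n) = true ↔ f ∈ S)

def Guessable (S : Set (ℕ → ℕ)) : Prop := ∃ G, Guesses G S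

/-- `G, H` witness that `S` is guessable with `< α` mind changes. -/
def WitnessMC (S : Set (ℕ → ℕ)) (α : Ordinal.{0}) (G : List ℕ → Bool)
    (H : List ℕ → Ordinal.{0}) : Prop :=
  Guesses G S ∧ (∀ σ, H σ < α) ∧
  (∀ (f : ℕ → ℕ) (n : ℕ), H (res f (n + 1)) ≤ H (res f n)) ∧
  (∀ (f : ℕ → ℕ) (n : ℕ), G (res f (n + 1)) ≠ G (res f n) →
    H (res f (n + 1)) < H (res f n))

def GuessableMC (S : Set (ℕ → ℕ)) (α : Ordinal.{0}) : Prop := ∃ G H, WitnessMC S α G H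

/-- An ordinal is even if it is of the form `λ + n` with `λ` limit or zero and `n` even. -/
def OrdEven (o : Ordinal.{0}) : Prop :=
  ∃ (l : Ordinal.{0}) (n : ℕ), (l = 0 ∨ Order.IsSuccLimit l) ∧ o = l + n ∧ Even n

/-- The Hausdorff difference set `D_α((A_η)_{η<α})`. -/
def DSet (α : Ordinal.{0}) (A : Ordinal.{0} → Set (ℕ → ℕ)) : Set (ℕ → ℕ) :=
  {x | ∃ η, η < α ∧ x ∈ A η ∧ (∀ η', η' < η → x ∉ A η') ∧ (OrdEven η ↔ ¬ OrdEven α)}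

/-- Membership in the class `D_α(Σ⁰₁)`. -/
def InDiff (α : Ordinal.{0}) (S : Set (ℕ → ℕ)) : Prop :=
  ∃ A : Ordinal.{0} → Set (ℕ → ℕ), (∀ η, η < α → IsOpen (A η)) ∧
    (∀ η η', η ≤ η' → η' < α → A η ⊆ A η') ∧ S = DSet α A
/-- Wadge's `Rm_Ω(S)`: the stable value of `Rm_μ(S, Sᶜ)`. -/
noncomputable def RmInf (S : Set (ℕ → ℕ)) : Set (ℕ → ℕ) :=
  Rm S Sᶜ (sInf {μ : Ordinal.{0} | Rm S Sᶜ μ = Rm S Sᶜ (μ + 1)})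

/-- The canonical guesser `G_S`. -/
noncomputable def GS (S : Set (ℕ → ℕ)) (σ : List ℕ) : Bool :=
  if (∃ f : ℕ → ℕ, res f σ.length = σ ∧ f ∈ seqsIn (SRem S (betaOf S σ - 1))) then
    decide (∃ f : ℕ → ℕ, res f σ.length = σ ∧ f ∈ seqsIn (SRem S (betaOf S σ - 1)) ∧ f ∈ S)
  else if h : σ = [] then false
  else GS S σ.dropLast
termination_by σ.length
decreasing_by
  simp only [List.length_dropLast]
  exact Nat.sub_lt (List.length_pos_iff.mpr h) one_pos

/-- `S` is `F_σ`: a countable union of closed sets. -/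
def IsFsigma (S : Set (ℕ → ℕ)) : Prop :=
  ∃ C : ℕ → Set (ℕ → ℕ), (∀ n, IsClosed (C n)) ∧ S = ⋃ n, C n

/-- Boolean combinations of open sets. -/
inductive BoolComb : Set (ℕ → ℕ) → Prop
  | isOpen {s : Set (ℕ → ℕ)} : IsOpen s → BoolComb s
  | compl {s : Set (ℕ → ℕ)} : BoolComb s → BoolComb sᶜ
  | union {s t : Set (ℕ → ℕ)} : BoolComb s → BoolComb t → BoolComb (s ∪ t)

/-- The Borel class `Σ⁰_α` on Baire space (for `α ≥ 1`). -/
noncomputable def Sigma0 (α : Ordinal.{0}) : Set (Set (ℕ → ℕ)) :=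
  if α = 1 then {s | IsOpen s}
  else {s | ∃ g : ℕ → Set (ℕ → ℕ), s = ⋃ n, g n ∧
    ∀ n, ∃ β : {β : Ordinal.{0} // β < α}, 1 ≤ β.1 ∧ (g n)ᶜ ∈ Sigma0 β.1}
termination_by α
decreasing_by exact β.2

/-- The ambiguous Borel class `Δ⁰_α`. -/
noncomputable def Delta0 (α : Ordinal.{0}) : Set (Set (ℕ → ℕ)) :=
  {s | s ∈ Sigma0 α ∧ sᶜ ∈ Sigma0 α}

/-- The Boolean characteristic function. -/
noncomputable def chi (X : Set (ℕ → ℕ)) (f : ℕ → ℕ) : Bool := decide (f ∈ X)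

/-- `G` guesses `S` based on the sequence of sets `Ss`. -/
def GuessesBased (G : List Bool → Bool) (Ss : ℕ → Set (ℕ → ℕ)) (S : Set (ℕ → ℕ)) : Prop :=
  ∀ f : ℕ → ℕ, ∀ᶠ n in atTop,
    (G (List.ofFn (fun i : Fin n => chi (Ss i) f)) = true ↔ f ∈ S)

/-- `S` is `μ`th-order guessable. -/
def HigherGuessable (μ : Ordinal.{0}) (S : Set (ℕ → ℕ)) : Prop :=
  ∃ Ss : ℕ → Set (ℕ → ℕ), (∀ i, ∃ μi, μi < μ ∧ Ss i ∈ Delta0 (μi + 1)) ∧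
    ∃ G : List Bool → Bool, GuessesBased G Ss S


lemma cyl_open (f : ℕ → ℕ) (k : ℕ) : IsOpen {g : ℕ → ℕ | ∀ i < k, g i = f i} := by
  have h : {g : ℕ → ℕ | ∀ i < k, g i = f i} = ⋂ i ∈ Finset.range k, {g : ℕ → ℕ | g i = f i} := by
    ext g; simp [Finset.mem_range]
  rw [h]
  refine isOpen_biInter_finset fun i _ => ?_
  have : {g : ℕ → ℕ | g i = f i} = (fun g : ℕ → ℕ => g i) ⁻¹' {f i} := rfl
  rw [this]
  exact IsOpen.preimage (continuous_apply i) (isOpen_discrete {f i})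

lemma open_eq_iUnion_clopen {U : Set (ℕ → ℕ)} (hU : IsOpen U) :
    ∃ C : ℕ → Set (ℕ → ℕ), (∀ n, IsOpen (C n) ∧ IsOpen (C n)ᶜ) ∧ U = ⋃ n, C n := by
  refine ⟨fun k => {f | ∀ g : ℕ → ℕ, (∀ i < k, g i = f i) → g ∈ U}, fun k => ⟨?_, ?_⟩, ?_⟩
  · rw [isOpen_iff_forall_mem_open]
    intro f hf
    exact ⟨{g | ∀ i < k, g i = f i},
      fun g hg g' hg' => hf g' (fun i hi => (hg' i hi).trans (hg i hi)),
      cyl_open f k, fun i _ => rfl⟩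
  · rw [isOpen_iff_forall_mem_open]
    intro f hf
    simp only [Set.mem_compl_iff, Set.mem_setOf_eq, not_forall] at hf
    obtain ⟨g0, hg0, hg0U⟩ := hf
    refine ⟨{g | ∀ i < k, g i = f i}, ?_, cyl_open f k, fun i _ => rfl⟩
    intro g hg hgC
    exact hg0U (hgC g0 (fun i hi => (hg0 i hi).trans (hg i hi).symm))
  · ext f
    simp only [Set.mem_iUnion, Set.mem_setOf_eq]
    constructor
    · intro hf
      obtain ⟨I, u, hu, hsub⟩ := isOpen_pi_iff.1 hU f hf
      refine ⟨(I.sup id) + 1, fun g hg => hsub ?_⟩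
      intro i hi
      rw [hg i (Nat.lt_succ_of_le (Finset.le_sup (f := id) hi))]
      exact (hu i hi).2
    · rintro ⟨k, hk⟩; exact hk f (fun _ _ => rfl)

lemma sigma0_open {α : Ordinal.{0}} (h1 : 1 ≤ α) {s : Set (ℕ → ℕ)} (hs : IsOpen s) :
    s ∈ Sigma0 α := by
  rcases eq_or_lt_of_le h1 with h | h
  · rw [Sigma0, if_pos h.symm]; exact hs
  · have hα1 : α ≠ 1 := fun h' => absurd h (h' ▸ lt_irrefl _)
    obtain ⟨C, hC, hCeq⟩ := open_eq_iUnion_clopen hs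
    rw [Sigma0, if_neg hα1]
    refine ⟨C, hCeq, fun n => ⟨⟨1, h⟩, le_rfl, ?_⟩⟩
    rw [Sigma0, if_pos rfl]
    exact (hC n).2

lemma sigma0_mono {α γ : Ordinal.{0}} (h1 : 1 ≤ α) (hγ : α ≤ γ) :
    Sigma0 α ⊆ Sigma0 γ := by
  rcases eq_or_lt_of_le hγ with h | h
  · rw [h]
  · have hγ1 : γ ≠ 1 := fun h' => absurd (lt_of_le_of_lt h1 h) (h' ▸ lt_irrefl _)
    intro s hs
    by_cases hα1 : α = 1
    · subst hα1
      rw [Sigma0, if_pos rfl] at hs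
      exact sigma0_open (le_of_lt h) hs
    · rw [Sigma0, if_neg hα1] at hs
      rw [Sigma0, if_neg hγ1]
      obtain ⟨g, hgeq, hg⟩ := hs
      exact ⟨g, hgeq, fun n => by
        obtain ⟨β, hβ1, hβ⟩ := hg n
        exact ⟨⟨β.1, lt_of_lt_of_le β.2 hγ⟩, hβ1, hβ⟩⟩

lemma sigma0_union_inter : ∀ α : Ordinal.{0}, 1 ≤ α → ∀ s t : Set (ℕ → ℕ),
    s ∈ Sigma0 α → t ∈ Sigma0 α → s ∪ t ∈ Sigma0 α ∧ s ∩ t ∈ Sigma0 α := by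
  intro α
  induction α using Ordinal.induction with
  | h α IH =>
    intro h1 s t hs ht
    by_cases hα1 : α = 1
    · subst hα1
      rw [Sigma0, if_pos rfl] at hs ht
      have hs' : IsOpen s := hs
      have ht' : IsOpen t := ht
      constructor
      · rw [Sigma0, if_pos rfl]; exact hs'.union ht'
      · rw [Sigma0, if_pos rfl]; exact hs'.inter ht'
    · rw [Sigma0, if_neg hα1] at hs ht
      obtain ⟨g, hge, hg⟩ := hs
      obtain ⟨h, hhe, hh⟩ := ht
      subst hge hhe
      constructor
      · rw [Sigma0, if_neg hα1]
        refine ⟨fun n => g n ∪ h n, by rw [Set.iUnion_union_distrib], fun n => ?_⟩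
        obtain ⟨β, hβ1, hβ⟩ := hg n
        obtain ⟨γ, hγ1, hγ⟩ := hh n
        refine ⟨⟨max β.1 γ.1, max_lt β.2 γ.2⟩, le_max_of_le_left hβ1, ?_⟩
        have h2 : (g n ∪ h n)ᶜ = (g n)ᶜ ∩ (h n)ᶜ := Set.compl_union _ _
        rw [h2]
        exact (IH _ (max_lt β.2 γ.2) (le_max_of_le_left hβ1) _ _
          (sigma0_mono hβ1 (le_max_left _ _) hβ)
          (sigma0_mono hγ1 (le_max_right _ _) hγ)).2
      · rw [Sigma0, if_neg hα1]
        refine ⟨fun n => g n.unpair.1 ∩ h n.unpair.2, ?_, fun n => ?_⟩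
        · ext f
          simp only [Set.mem_inter_iff, Set.mem_iUnion]
          constructor
          · rintro ⟨⟨n, hn⟩, ⟨m, hm⟩⟩
            exact ⟨Nat.pair n m, by rw [Nat.unpair_pair]; exact ⟨hn, hm⟩⟩
          · rintro ⟨n, hn, hm⟩
            exact ⟨⟨_, hn⟩, ⟨_, hm⟩⟩
        · obtain ⟨β, hβ1, hβ⟩ := hg n.unpair.1
          obtain ⟨γ, hγ1, hγ⟩ := hh n.unpair.2
          refine ⟨⟨max β.1 γ.1, max_lt β.2 γ.2⟩, le_max_of_le_left hβ1, ?_⟩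
          have h2 : (g n.unpair.1 ∩ h n.unpair.2)ᶜ = (g n.unpair.1)ᶜ ∪ (h n.unpair.2)ᶜ :=
            Set.compl_inter _ _
          rw [h2]
          exact (IH _ (max_lt β.2 γ.2) (le_max_of_le_left hβ1) _ _
            (sigma0_mono hβ1 (le_max_left _ _) hβ)
            (sigma0_mono hγ1 (le_max_right _ _) hγ)).1

lemma delta0_compl {α : Ordinal.{0}} {s : Set (ℕ → ℕ)} (h : s ∈ Delta0 α) : sᶜ ∈ Delta0 α :=
  ⟨h.2, by rw [compl_compl]; exact h.1⟩

lemma delta0_union {α : Ordinal.{0}} (h1 : 1 ≤ α) {s t : Set (ℕ → ℕ)}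
    (hs : s ∈ Delta0 α) (ht : t ∈ Delta0 α) : s ∪ t ∈ Delta0 α :=
  ⟨(sigma0_union_inter α h1 _ _ hs.1 ht.1).1,
   by rw [Set.compl_union]; exact (sigma0_union_inter α h1 _ _ hs.2 ht.2).2⟩

lemma delta0_inter {α : Ordinal.{0}} (h1 : 1 ≤ α) {s t : Set (ℕ → ℕ)}
    (hs : s ∈ Delta0 α) (ht : t ∈ Delta0 α) : s ∩ t ∈ Delta0 α :=
  ⟨(sigma0_union_inter α h1 _ _ hs.1 ht.1).2,
   by rw [Set.compl_inter]; exact (sigma0_union_inter α h1 _ _ hs.2 ht.2).1⟩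

lemma delta0_mono {α γ : Ordinal.{0}} (h1 : 1 ≤ α) (hγ : α ≤ γ) : Delta0 α ⊆ Delta0 γ :=
  fun _ hs => ⟨sigma0_mono h1 hγ hs.1, sigma0_mono h1 hγ hs.2⟩

lemma delta0_univ {α : Ordinal.{0}} (h1 : 1 ≤ α) : (Set.univ : Set (ℕ → ℕ)) ∈ Delta0 α :=
  ⟨sigma0_open h1 isOpen_univ, by rw [Set.compl_univ]; exact sigma0_open h1 isOpen_empty⟩

lemma delta0_empty {α : Ordinal.{0}} (h1 : 1 ≤ α) : (∅ : Set (ℕ → ℕ)) ∈ Delta0 α :=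
  ⟨sigma0_open h1 isOpen_empty, by rw [Set.compl_empty]; exact sigma0_open h1 isOpen_univ⟩

lemma delta0_biUnion {α : Ordinal.{0}} (h1 : 1 ≤ α) (g : ℕ → Set (ℕ → ℕ)) (n : ℕ)
    (hg : ∀ i, i < n → g i ∈ Delta0 α) : (⋃ i ∈ Finset.range n, g i) ∈ Delta0 α := by
  induction n with
  | zero => simpa using delta0_empty h1
  | succ n ih =>
    rw [Finset.range_add_one, Finset.set_biUnion_insert]
    exact delta0_union h1 (hg n (Nat.lt_succ_self n))
      (ih fun i hi => hg i (hi.trans (Nat.lt_succ_self n)))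

lemma delta0_biInter {α : Ordinal.{0}} (h1 : 1 ≤ α) (g : ℕ → Set (ℕ → ℕ)) (n : ℕ)
    (hg : ∀ i, i < n → g i ∈ Delta0 α) : (⋂ i ∈ Finset.range n, g i) ∈ Delta0 α := by
  induction n with
  | zero => simpa using delta0_univ h1
  | succ n ih =>
    rw [Finset.range_add_one, Finset.set_biInter_insert]
    exact delta0_inter h1 (hg n (Nat.lt_succ_self n))
      (ih fun i hi => hg i (hi.trans (Nat.lt_succ_self n)))

lemma ord_lt_add_one (a : Ordinal.{0}) : a < a + 1 := by
  rw [Ordinal.add_one_eq_succ]; exact Order.lt_succ a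

lemma ord_lt_add_one_iff {a b : Ordinal.{0}} : a < b + 1 ↔ a ≤ b := by
  rw [Ordinal.add_one_eq_succ, Order.lt_succ_iff]

lemma sigma0_succ_decomp {μ : Ordinal.{0}} (h1 : 1 ≤ μ) {S : Set (ℕ → ℕ)}
    (hS : S ∈ Sigma0 (μ + 1)) :
    ∃ V : ℕ → ℕ → Set (ℕ → ℕ), (∀ n k, ∃ δ, δ < μ ∧ V n k ∈ Delta0 (δ + 1)) ∧
      S = ⋃ n, ⋂ k, V n k := by
  have hμ1 : (1 : Ordinal) < μ + 1 := by
    calc (1 : Ordinal) ≤ μ := h1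
    _ < μ + 1 := ord_lt_add_one μ
  rw [Sigma0, if_neg (ne_of_gt hμ1)] at hS
  obtain ⟨g, hge, hg⟩ := hS
  have key : ∀ n, ∃ W : ℕ → Set (ℕ → ℕ),
      (∀ k, ∃ δ, δ < μ ∧ W k ∈ Delta0 (δ + 1)) ∧ g n = ⋂ k, W k := by
    intro n
    obtain ⟨β, hβ1, hβ⟩ := hg n
    have hβμ : β.1 ≤ μ := ord_lt_add_one_iff.1 β.2
    by_cases hb1 : β.1 = 1
    · rw [hb1, Sigma0, if_pos rfl] at hβ
      obtain ⟨C, hC, hCeq⟩ := open_eq_iUnion_clopen hβ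
      refine ⟨fun k => (C k)ᶜ, fun k => ⟨0, lt_of_lt_of_le zero_lt_one h1, ?_⟩, ?_⟩
      · rw [zero_add]
        exact ⟨sigma0_open le_rfl (hC k).2,
          by rw [compl_compl]; exact sigma0_open le_rfl (hC k).1⟩
      · rw [← compl_compl (g n), hCeq, Set.compl_iUnion]
    · have hb : 1 < β.1 := lt_of_le_of_ne hβ1 (Ne.symm hb1)
      rw [Sigma0, if_neg hb1] at hβ
      obtain ⟨w, hw, hwk⟩ := hβ
      refine ⟨fun k => (w k)ᶜ, fun k => ?_, ?_⟩
      · obtain ⟨γ, hγ1, hγ⟩ := hwk k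
        refine ⟨γ.1, lt_of_lt_of_le γ.2 hβμ, ?_, ?_⟩
        · exact sigma0_mono hγ1 (le_of_lt (ord_lt_add_one γ.1)) hγ
        · have hγ11 : (1 : Ordinal) < γ.1 + 1 := lt_of_le_of_lt hγ1 (ord_lt_add_one γ.1)
          rw [compl_compl, Sigma0, if_neg (ne_of_gt hγ11)]
          refine ⟨fun _ => w k, (Set.iUnion_const _).symm, fun _ => ?_⟩
          exact ⟨⟨γ.1, ord_lt_add_one γ.1⟩, hγ1, hγ⟩
      · rw [← compl_compl (g n), hw, Set.compl_iUnion]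
  choose W hW hWeq using key
  exact ⟨W, hW, by rw [hge]; exact Set.iUnion_congr hWeq⟩

noncomputable def Useq (V W : ℕ → ℕ → Set (ℕ → ℕ)) (m k : ℕ) : Set (ℕ → ℕ) :=
  if Even m then V (m / 2) k else W (m / 2) k

lemma Useq_even (V W : ℕ → ℕ → Set (ℕ → ℕ)) (n k : ℕ) : Useq V W (2 * n) k = V n k := by
  unfold Useq
  rw [if_pos ⟨n, two_mul n⟩, Nat.mul_div_cancel_left n (by norm_num)]

lemma Useq_odd (V W : ℕ → ℕ → Set (ℕ → ℕ)) (n k : ℕ) : Useq V W (2 * n + 1) k = W n k := by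
  unfold Useq
  rw [if_neg (by rw [Nat.even_add_one]; exact not_not_intro ⟨n, two_mul n⟩)]
  have h : (2 * n + 1) / 2 = n := by omega
  rw [h]

noncomputable def Bset (V W : ℕ → ℕ → Set (ℕ → ℕ)) (m j : ℕ) : Set (ℕ → ℕ) :=
  ⋂ k ∈ Finset.range (j + 1), Useq V W m k

noncomputable def Aset (V W : ℕ → ℕ → Set (ℕ → ℕ)) (j : ℕ) : Set (ℕ → ℕ) :=
  ⋃ m ∈ Finset.range (j + 1),
    (if Even m then Bset V W m j ∩ ⋂ m' ∈ Finset.range m, (Bset V W m' j)ᶜ else ∅)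

lemma Aset_mem {V W : ℕ → ℕ → Set (ℕ → ℕ)} {μ : Ordinal.{0}} (h1 : 1 ≤ μ)
    (hV : ∀ n k, ∃ δ, δ < μ ∧ V n k ∈ Delta0 (δ + 1))
    (hW : ∀ n k, ∃ δ, δ < μ ∧ W n k ∈ Delta0 (δ + 1)) (j : ℕ) :
    ∃ δ, δ < μ ∧ Aset V W j ∈ Delta0 (δ + 1) := by
  have hU : ∀ m k, ∃ δ, δ < μ ∧ Useq V W m k ∈ Delta0 (δ + 1) := by
    intro m k
    unfold Useq
    split_ifs
    · exact hV _ k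
    · exact hW _ k
  choose d hd1 hd2 using hU
  set δ : Ordinal.{0} :=
    ((Finset.range (j + 1)) ×ˢ (Finset.range (j + 1))).sup (fun p => d p.1 p.2) with hδdef
  have hδμ : δ < μ := by
    apply Finset.sup_lt_iff (by rw [Ordinal.bot_eq_zero]; exact lt_of_lt_of_le zero_lt_one h1) |>.2
    exact fun p _ => hd1 p.1 p.2
  have h1δ : (1 : Ordinal) ≤ δ + 1 := le_add_self
  have hUδ : ∀ m k, m ≤ j → k ≤ j → Useq V W m k ∈ Delta0 (δ + 1) := by
    intro m k hm hk
    refine delta0_mono (le_add_self (a := 1) (b := d m k)) (add_le_add_left ?_ 1) (hd2 m k)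
    have hm' : m ∈ Finset.range (j + 1) := Finset.mem_range.2 (Nat.lt_succ_of_le hm)
    have hk' : k ∈ Finset.range (j + 1) := Finset.mem_range.2 (Nat.lt_succ_of_le hk)
    have hmk : ((m, k) : ℕ × ℕ) ∈ (Finset.range (j + 1)) ×ˢ (Finset.range (j + 1)) :=
      Finset.mem_product.2 ⟨hm', hk'⟩
    exact Finset.le_sup (f := fun p : ℕ × ℕ => d p.1 p.2) hmk
  have hB : ∀ m, m ≤ j → Bset V W m j ∈ Delta0 (δ + 1) := by
    intro m hm
    exact delta0_biInter h1δ _ _ (fun k hk => hUδ m k hm (Nat.lt_succ_iff.1 hk))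
  refine ⟨δ, hδμ, delta0_biUnion h1δ _ _ (fun m hm => ?_)⟩
  split_ifs
  · exact delta0_inter h1δ (hB m (Nat.lt_succ_iff.1 hm))
      (delta0_biInter h1δ _ _ (fun m' hm' =>
        delta0_compl (hB m' (le_of_lt (lt_of_lt_of_le hm' (Nat.lt_succ_iff.1 hm))))))
  · exact delta0_empty h1δ

lemma Aset_conv {V W : ℕ → ℕ → Set (ℕ → ℕ)} {S : Set (ℕ → ℕ)}
    (hSV : S = ⋃ n, ⋂ k, V n k) (hSW : Sᶜ = ⋃ n, ⋂ k, W n k) (f : ℕ → ℕ) :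
    ∃ N, ∀ j, N ≤ j → (f ∈ Aset V W j ↔ f ∈ S) := by
  have htot : ∃ m, f ∈ ⋂ k, Useq V W m k := by
    by_cases hf : f ∈ S
    · rw [hSV] at hf
      obtain ⟨n, hn⟩ := Set.mem_iUnion.1 hf
      exact ⟨2 * n, Set.mem_iInter.2 fun k => by
        rw [Useq_even]; exact Set.mem_iInter.1 hn k⟩
    · rw [← Set.mem_compl_iff, hSW] at hf
      obtain ⟨n, hn⟩ := Set.mem_iUnion.1 hf
      exact ⟨2 * n + 1, Set.mem_iInter.2 fun k => by
        rw [Useq_odd]; exact Set.mem_iInter.1 hn k⟩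
  set m0 := Nat.find htot with hm0def
  have hm0 : f ∈ ⋂ k, Useq V W m0 k := Nat.find_spec htot
  have hmin : ∀ m, m < m0 → f ∉ ⋂ k, Useq V W m k := fun m hm => Nat.find_min htot hm
  have hkex : ∀ m, ∃ k, m < m0 → f ∉ Useq V W m k := by
    intro m
    by_cases hm : m < m0
    · have := hmin m hm
      rw [Set.mem_iInter, not_forall] at this
      obtain ⟨k, hk⟩ := this
      exact ⟨k, fun _ => hk⟩
    · exact ⟨0, fun h => absurd h hm⟩
  choose kf hkf using hkex
  set N := max m0 ((Finset.range m0).sup kf) with hNdef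
  have hpar : Even m0 ↔ f ∈ S := by
    constructor
    · rintro ⟨r, hr⟩
      have hr2 : m0 = 2 * r := by omega
      rw [hSV]
      refine Set.mem_iUnion.2 ⟨r, Set.mem_iInter.2 fun k => ?_⟩
      have := Set.mem_iInter.1 hm0 k
      rwa [hr2, Useq_even] at this
    · intro hfS
      by_contra hodd
      obtain ⟨r, hr⟩ := Nat.not_even_iff_odd.1 hodd
      have hr2 : m0 = 2 * r + 1 := by omega
      have hfc : f ∈ Sᶜ := by
        rw [hSW]
        refine Set.mem_iUnion.2 ⟨r, Set.mem_iInter.2 fun k => ?_⟩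
        have := Set.mem_iInter.1 hm0 k
        rwa [hr2, Useq_odd] at this
      exact hfc hfS
  refine ⟨N, fun j hj => ?_⟩
  have hBm0 : f ∈ Bset V W m0 j :=
    Set.mem_iInter₂.2 fun k _ => Set.mem_iInter.1 hm0 k
  have hBlt : ∀ m, m < m0 → f ∉ Bset V W m j := by
    intro m hm hmem
    have hkm : kf m ≤ j := by
      have h1 : kf m ≤ (Finset.range m0).sup kf :=
        Finset.le_sup (Finset.mem_range.2 hm)
      omega
    exact hkf m hm (Set.mem_iInter₂.1 hmem (kf m)
      (Finset.mem_range.2 (Nat.lt_succ_of_le hkm)))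
  constructor
  · intro hfA
    obtain ⟨m, hmr, hmem⟩ := Set.mem_iUnion₂.1 hfA
    by_cases he : Even m
    · rw [if_pos he] at hmem
      obtain ⟨hmB, hmC⟩ := hmem
      rcases lt_trichotomy m m0 with h | h | h
      · exact absurd hmB (hBlt m h)
      · exact hpar.1 (h ▸ he)
      · exact absurd hBm0 (Set.mem_iInter₂.1 hmC m0 (Finset.mem_range.2 h))
    · rw [if_neg he] at hmem
      exact absurd hmem (Set.notMem_empty f)
  · intro hfS
    have he : Even m0 := hpar.2 hfS
    refine Set.mem_iUnion₂.2 ⟨m0, Finset.mem_range.2 (by omega), ?_⟩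
    rw [if_pos he]
    exact ⟨hBm0, Set.mem_iInter₂.2 fun m' hm' => hBlt m' (Finset.mem_range.1 hm')⟩

lemma getLastD_ofFn_succ (n : ℕ) (g : Fin (n + 1) → Bool) :
    (List.ofFn g).getLastD false = g (Fin.last n) := by
  rw [List.ofFn_succ']
  simp

theorem stmt15 (μ : Ordinal.{0}) (h1 : 1 ≤ μ) (h2 : μ < (Cardinal.aleph 1).ord)
    (S : Set (ℕ → ℕ)) (hS : S ∈ Delta0 (μ + 1)) :
    HigherGuessable μ S ∧
    ∃ A : ℕ → Set (ℕ → ℕ), (∀ i, ∃ μi, μi < μ ∧ A i ∈ Delta0 (μi + 1)) ∧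
      (S = ⋃ n, ⋂ m, ⋂ (_ : n ≤ m), A m) ∧
      (S = ⋂ n, ⋃ m, ⋃ (_ : n ≤ m), A m) ∧
      GuessesBased (fun l => l.getLastD false) A S := by
  obtain ⟨V, hV, hSV⟩ := sigma0_succ_decomp h1 hS.1
  obtain ⟨W, hW, hSW⟩ := sigma0_succ_decomp h1 hS.2
  have hconv := fun f => Aset_conv hSV hSW f
  have hlev := Aset_mem h1 hV hW
  have hguess : GuessesBased (fun l => l.getLastD false) (Aset V W) S := by
    intro f
    obtain ⟨N, hN⟩ := hconv f
    rw [eventually_atTop]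
    refine ⟨N + 1, fun n hn => ?_⟩
    obtain ⟨n', rfl⟩ : ∃ n', n = n' + 1 := ⟨n - 1, by omega⟩
    show (List.ofFn fun i : Fin (n' + 1) => chi (Aset V W i) f).getLastD false = true ↔ f ∈ S
    rw [getLastD_ofFn_succ n' (fun i : Fin (n' + 1) => chi (Aset V W i) f)]
    simp only [chi, Fin.val_last, decide_eq_true_eq]
    exact hN n' (by omega)
  refine ⟨⟨Aset V W, hlev, ⟨_, hguess⟩⟩, Aset V W, hlev, ?_, ?_, hguess⟩
  · ext f
    simp only [Set.mem_iUnion, Set.mem_iInter]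
    constructor
    · intro hf
      obtain ⟨N, hN⟩ := hconv f
      exact ⟨N, fun m hm => (hN m hm).2 hf⟩
    · rintro ⟨n, hn⟩
      obtain ⟨N, hN⟩ := hconv f
      exact (hN (max n N) (le_max_right _ _)).1 (hn (max n N) (le_max_left _ _))
  · ext f
    simp only [Set.mem_iInter, Set.mem_iUnion]
    constructor
    · intro hf n
      obtain ⟨N, hN⟩ := hconv f
      exact ⟨max n N, le_max_left _ _, (hN _ (le_max_right _ _)).2 hf⟩
    · intro h
      obtain ⟨N, hN⟩ := hconv f
      obtain ⟨m, hm, hfm⟩ := h N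
      exact (hN m hm).1 hfm
end

section
/- For 1 ≤ μ < ω₁: S is μth-order guessable if and only if S ∈ Δ⁰_{μ+1}. -/
open Filter Topology Classical

namespace Stmt16
open Set

/-! ### Cylinders -/

def cyl (σ : List ℕ) : Set (ℕ → ℕ) := {f | res f σ.length = σ}

lemma res_length (f : ℕ → ℕ) (n : ℕ) : (res f n).length = n := by simp [res]

lemma self_mem_cyl (f : ℕ → ℕ) (n : ℕ) : f ∈ cyl (res f n) := by
  simp [cyl, res_length]

lemma mem_cyl_agree {f g : ℕ → ℕ} {n : ℕ} (hg : g ∈ cyl (res f n)) :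
    ∀ i < n, g i = f i := by
  intro i hi
  have h := hg
  simp only [cyl, res_length, Set.mem_setOf_eq] at h
  have := congrArg (fun l => l.getD i 0) h
  simpa [res, List.getD_eq_getElem?_getD, List.getElem?_ofFn, List.ofFnNthVal, hi] using this

lemma isClopen_cyl (σ : List ℕ) : IsClopen (cyl σ) := by
  have : cyl σ = ⋂ i : Fin σ.length, {f : ℕ → ℕ | f i = σ.get i} := by
    ext f
    simp only [cyl, Set.mem_setOf_eq, Set.mem_iInter, res]
    constructor
    · intro h i
      have := congrArg (fun l => l.getD i 0) h
      simpa [List.getD_eq_getElem?_getD, List.getElem?_ofFn, List.ofFnNthVal, i.isLt,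
        List.getElem?_eq_getElem, List.get_eq_getElem] using this
    · intro h
      apply List.ext_getElem (by simp)
      intro i h1 h2
      simpa [List.get_eq_getElem] using h ⟨i, by simpa using h1⟩
  rw [this]
  constructor
  · refine isClosed_iInter fun i => ?_
    show IsClosed ((fun p : ℕ → ℕ => p (i : ℕ)) ⁻¹' {σ.get i})
    exact isClosed_singleton.preimage (continuous_apply (i : ℕ))
  · refine isOpen_iInter_of_finite fun i => ?_
    show IsOpen ((fun p : ℕ → ℕ => p (i : ℕ)) ⁻¹' {σ.get i})
    exact (isOpen_discrete _).preimage (continuous_apply (i : ℕ))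

lemma exists_cyl_subset {U : Set (ℕ → ℕ)} (hU : IsOpen U) {f : ℕ → ℕ} (hf : f ∈ U) :
    ∃ n, cyl (res f n) ⊆ U := by
  obtain ⟨I, u, h1, h2⟩ := isOpen_pi_iff.mp hU f hf
  refine ⟨I.sup id + 1, fun g hg => h2 ?_⟩
  intro a ha
  have hlt : a < I.sup id + 1 := Nat.lt_succ_of_le (Finset.le_sup (f := id) ha)
  rw [mem_cyl_agree hg a hlt]
  exact (h1 a ha).2

lemma open_eq_iUnion_clopen {U : Set (ℕ → ℕ)} (hU : IsOpen U) :
    ∃ C : ℕ → Set (ℕ → ℕ), (∀ n, IsClopen (C n)) ∧ U = ⋃ n, C n := by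
  classical
  refine ⟨fun n => if cyl (Denumerable.ofNat (List ℕ) n) ⊆ U
      then cyl (Denumerable.ofNat (List ℕ) n) else ∅, fun n => ?_, ?_⟩
  · dsimp only; split
    · exact isClopen_cyl _
    · exact isClopen_empty
  · ext f
    simp only [Set.mem_iUnion]
    constructor
    · intro hf
      obtain ⟨n, hn⟩ := exists_cyl_subset hU hf
      refine ⟨Encodable.encode (res f n), ?_⟩
      rw [Denumerable.ofNat_encode]
      simp only [hn, if_true]
      exact self_mem_cyl f n
    · rintro ⟨n, hn⟩
      split at hn
      · exact ‹_ ⊆ U› hn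
      · exact absurd hn (Set.notMem_empty f)

end Stmt16
namespace Stmt16
open Set

/-! ### Sigma0 basics -/

lemma sigma0_one : Sigma0 1 = {s | IsOpen s} := by rw [Sigma0]; simp

lemma mem_sigma0_iff {α : Ordinal.{0}} (hα : α ≠ 1) {s : Set (ℕ → ℕ)} :
    s ∈ Sigma0 α ↔ ∃ g : ℕ → Set (ℕ → ℕ), s = ⋃ n, g n ∧
      ∀ n, ∃ β : Ordinal.{0}, β < α ∧ 1 ≤ β ∧ (g n)ᶜ ∈ Sigma0 β := by
  rw [Sigma0]
  simp only [hα, if_false, Set.mem_setOf_eq]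
  constructor
  · rintro ⟨g, h1, h2⟩
    exact ⟨g, h1, fun n => by obtain ⟨⟨β, hβ⟩, h3, h4⟩ := h2 n; exact ⟨β, hβ, h3, h4⟩⟩
  · rintro ⟨g, h1, h2⟩
    exact ⟨g, h1, fun n => by obtain ⟨β, hβ, h3, h4⟩ := h2 n; exact ⟨⟨β, hβ⟩, h3, h4⟩⟩

lemma isOpen_mem_sigma0 {α : Ordinal.{0}} (hα : 1 ≤ α) {s : Set (ℕ → ℕ)}
    (hs : IsOpen s) : s ∈ Sigma0 α := by
  by_cases h1 : α = 1
  · rw [h1, sigma0_one]; exact hs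
  · obtain ⟨C, hC, hCU⟩ := open_eq_iUnion_clopen hs
    rw [mem_sigma0_iff h1]
    refine ⟨C, hCU, fun n => ⟨1, lt_of_le_of_ne hα (fun h => h1 h.symm), le_refl 1, ?_⟩⟩
    rw [sigma0_one]
    exact (hC n).compl.2

lemma sigma0_mono {β α : Ordinal.{0}} (h1 : 1 ≤ β) (h : β ≤ α) :
    Sigma0 β ⊆ Sigma0 α := by
  intro s hs
  rcases eq_or_lt_of_le h with rfl | hlt
  · exact hs
  by_cases hb1 : β = 1
  · subst hb1
    rw [sigma0_one] at hs
    exact isOpen_mem_sigma0 (le_of_lt hlt) hs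
  · have hα1 : α ≠ 1 := by
      intro hc; subst hc
      exact absurd (lt_of_le_of_lt h1 hlt) (lt_irrefl 1)
    rw [mem_sigma0_iff hb1] at hs
    rw [mem_sigma0_iff hα1]
    obtain ⟨g, hg1, hg2⟩ := hs
    exact ⟨g, hg1, fun n => by
      obtain ⟨γ, hγ, h3, h4⟩ := hg2 n
      exact ⟨γ, lt_trans hγ hlt, h3, h4⟩⟩

lemma sigma0_iUnion {α : Ordinal.{0}} (hα : 1 ≤ α) {s : ℕ → Set (ℕ → ℕ)}
    (h : ∀ n, s n ∈ Sigma0 α) : (⋃ n, s n) ∈ Sigma0 α := by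
  by_cases h1 : α = 1
  · subst h1
    rw [sigma0_one] at *
    exact isOpen_iUnion fun n => show IsOpen (s n) from h n
  · have h' : ∀ n, ∃ g : ℕ → Set (ℕ → ℕ), s n = ⋃ m, g m ∧
        ∀ m, ∃ β : Ordinal.{0}, β < α ∧ 1 ≤ β ∧ (g m)ᶜ ∈ Sigma0 β :=
      fun n => (mem_sigma0_iff h1).mp (h n)
    choose g hg1 hg2 using h'
    rw [mem_sigma0_iff h1]
    refine ⟨fun k => g k.unpair.1 k.unpair.2, ?_, fun k => hg2 _ _⟩
    ext f
    simp only [Set.mem_iUnion]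
    constructor
    · rintro ⟨n, hn⟩
      rw [hg1 n] at hn
      obtain ⟨m, hm⟩ := Set.mem_iUnion.mp hn
      exact ⟨Nat.pair n m, by rw [Nat.unpair_pair]; exact hm⟩
    · rintro ⟨k, hk⟩
      refine ⟨k.unpair.1, ?_⟩
      rw [hg1 k.unpair.1]
      exact Set.mem_iUnion.mpr ⟨k.unpair.2, hk⟩

lemma sigma0_union {α : Ordinal.{0}} (hα : 1 ≤ α) {s t : Set (ℕ → ℕ)}
    (hs : s ∈ Sigma0 α) (ht : t ∈ Sigma0 α) : s ∪ t ∈ Sigma0 α := by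
  have : s ∪ t = ⋃ n : ℕ, (if n = 0 then s else t) := by
    ext f
    simp only [Set.mem_union, Set.mem_iUnion]
    constructor
    · rintro (hf | hf)
      · exact ⟨0, by simpa using hf⟩
      · exact ⟨1, by simpa using hf⟩
    · rintro ⟨n, hn⟩
      split at hn
      · exact Or.inl hn
      · exact Or.inr hn
  rw [this]
  exact sigma0_iUnion hα fun n => by split <;> assumption

lemma sigma0_inter {α : Ordinal.{0}} (hα : 1 ≤ α) {s t : Set (ℕ → ℕ)}
    (hs : s ∈ Sigma0 α) (ht : t ∈ Sigma0 α) : s ∩ t ∈ Sigma0 α := by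
  by_cases h1 : α = 1
  · subst h1
    rw [sigma0_one] at hs ht ⊢
    exact IsOpen.inter (show IsOpen s from hs) (show IsOpen t from ht)
  · rw [mem_sigma0_iff h1] at hs ht ⊢
    obtain ⟨g, hg1, hg2⟩ := hs
    obtain ⟨g', hg1', hg2'⟩ := ht
    refine ⟨fun k => g k.unpair.1 ∩ g' k.unpair.2, ?_, fun k => ?_⟩
    · ext f
      simp only [Set.mem_inter_iff, hg1, hg1', Set.mem_iUnion]
      constructor
      · rintro ⟨⟨n, hn⟩, ⟨m, hm⟩⟩
        exact ⟨Nat.pair n m, by rw [Nat.unpair_pair]; exact ⟨hn, hm⟩⟩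
      · rintro ⟨k, hk1, hk2⟩
        exact ⟨⟨k.unpair.1, hk1⟩, ⟨k.unpair.2, hk2⟩⟩
    · obtain ⟨β, hβ, hβ1, hβc⟩ := hg2 k.unpair.1
      obtain ⟨γ, hγ, hγ1, hγc⟩ := hg2' k.unpair.2
      refine ⟨max β γ, max_lt hβ hγ, le_trans hβ1 (le_max_left _ _), ?_⟩
      rw [Set.compl_inter]
      exact sigma0_union (le_trans hβ1 (le_max_left _ _))
        (sigma0_mono hβ1 (le_max_left _ _) hβc)
        (sigma0_mono hγ1 (le_max_right _ _) hγc)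

lemma compl_mem_sigma0_succ {γ : Ordinal.{0}} (hγ : 1 ≤ γ) {s : Set (ℕ → ℕ)}
    (h : sᶜ ∈ Sigma0 γ) : s ∈ Sigma0 (γ + 1) := by
  have hne : γ + 1 ≠ 1 := by
    have : (1 : Ordinal.{0}) < γ + 1 := by
      rw [Ordinal.add_one_eq_succ]
      exact lt_of_le_of_lt hγ (Order.lt_succ γ)
    exact ne_of_gt this
  rw [mem_sigma0_iff hne]
  refine ⟨fun _ => s, (Set.iUnion_const s).symm, fun n => ⟨γ, ?_, hγ, h⟩⟩
  rw [Ordinal.add_one_eq_succ]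
  exact Order.lt_succ γ

/-! ### Delta0 basics -/

lemma mem_delta0_iff {α : Ordinal.{0}} {s : Set (ℕ → ℕ)} :
    s ∈ Delta0 α ↔ s ∈ Sigma0 α ∧ sᶜ ∈ Sigma0 α := Iff.rfl

lemma delta0_compl {α : Ordinal.{0}} {s : Set (ℕ → ℕ)} (h : s ∈ Delta0 α) :
    sᶜ ∈ Delta0 α := ⟨h.2, by rw [compl_compl]; exact h.1⟩

lemma delta0_union {α : Ordinal.{0}} (hα : 1 ≤ α) {s t : Set (ℕ → ℕ)}
    (hs : s ∈ Delta0 α) (ht : t ∈ Delta0 α) : s ∪ t ∈ Delta0 α :=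
  ⟨sigma0_union hα hs.1 ht.1, by
    rw [Set.compl_union]; exact sigma0_inter hα hs.2 ht.2⟩

lemma delta0_inter {α : Ordinal.{0}} (hα : 1 ≤ α) {s t : Set (ℕ → ℕ)}
    (hs : s ∈ Delta0 α) (ht : t ∈ Delta0 α) : s ∩ t ∈ Delta0 α :=
  ⟨sigma0_inter hα hs.1 ht.1, by
    rw [Set.compl_inter]; exact sigma0_union hα hs.2 ht.2⟩

lemma delta0_mono {β α : Ordinal.{0}} (h1 : 1 ≤ β) (h : β ≤ α) :
    Delta0 β ⊆ Delta0 α :=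
  fun _ hs => ⟨sigma0_mono h1 h hs.1, sigma0_mono h1 h hs.2⟩

lemma isClopen_mem_delta0 {α : Ordinal.{0}} (hα : 1 ≤ α) {s : Set (ℕ → ℕ)}
    (hs : IsClopen s) : s ∈ Delta0 α :=
  ⟨isOpen_mem_sigma0 hα hs.2, isOpen_mem_sigma0 hα hs.compl.2⟩

lemma univ_mem_delta0 {α : Ordinal.{0}} (hα : 1 ≤ α) :
    (Set.univ : Set (ℕ → ℕ)) ∈ Delta0 α := isClopen_mem_delta0 hα isClopen_univ

lemma empty_mem_delta0 {α : Ordinal.{0}} (hα : 1 ≤ α) :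
    (∅ : Set (ℕ → ℕ)) ∈ Delta0 α := isClopen_mem_delta0 hα isClopen_empty

end Stmt16
namespace Stmt16
open Set Filter

lemma Bset_mem_delta0 {μ : Ordinal.{0}} (hμ : 1 ≤ μ) {Ss : ℕ → Set (ℕ → ℕ)}
    (hSs : ∀ i, Ss i ∈ Delta0 μ) :
    ∀ (n : ℕ) (G : List Bool → Bool),
      {f : ℕ → ℕ | G (List.ofFn fun i : Fin n => chi (Ss i) f) = true} ∈ Delta0 μ := by
  intro n
  induction n with
  | zero =>
    intro G
    by_cases hG : G [] = true
    · have : {f : ℕ → ℕ | G (List.ofFn fun i : Fin 0 => chi (Ss i) f) = true} = Set.univ := by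
        ext f; simp [List.ofFn_zero, hG]
      rw [this]; exact univ_mem_delta0 hμ
    · have : {f : ℕ → ℕ | G (List.ofFn fun i : Fin 0 => chi (Ss i) f) = true} = ∅ := by
        ext f; simp [List.ofFn_zero, hG]
      rw [this]; exact empty_mem_delta0 hμ
  | succ n ih =>
    intro G
    have key : {f : ℕ → ℕ | G (List.ofFn fun i : Fin (n+1) => chi (Ss i) f) = true} =
        ({f : ℕ → ℕ | (fun L => G (L.concat true)) (List.ofFn fun i : Fin n => chi (Ss i) f) = true} ∩ Ss n) ∪
        ({f : ℕ → ℕ | (fun L => G (L.concat false)) (List.ofFn fun i : Fin n => chi (Ss i) f) = true} ∩ (Ss n)ᶜ) := by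
      ext f
      have hofn : (List.ofFn fun i : Fin (n+1) => chi (Ss i) f) =
          (List.ofFn fun i : Fin n => chi (Ss i) f).concat (chi (Ss n) f) := by
        rw [List.ofFn_succ']
        rfl
      simp only [Set.mem_setOf_eq, Set.mem_union, Set.mem_inter_iff, Set.mem_compl_iff]
      rw [hofn]
      by_cases hf : f ∈ Ss n
      · have hchi : chi (Ss n) f = true := by simp [chi, hf]
        rw [hchi]
        simp [hf]
      · have hchi : chi (Ss n) f = false := by simp [chi, hf]
        rw [hchi]
        simp [hf]
    rw [key]
    exact delta0_union hμ
      (delta0_inter hμ (ih (fun L => G (L.concat true))) (hSs n))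
      (delta0_inter hμ (ih (fun L => G (L.concat false))) (delta0_compl (hSs n)))

lemma forward {μ : Ordinal.{0}} (hμ : 1 ≤ μ) {S : Set (ℕ → ℕ)}
    (h : HigherGuessable μ S) : S ∈ Delta0 (μ + 1) := by
  obtain ⟨Ss, hSs, G, hG⟩ := h
  have hμ1 : (1 : Ordinal.{0}) < μ + 1 := by
    rw [Ordinal.add_one_eq_succ]
    exact lt_of_le_of_lt hμ (Order.lt_succ μ)
  have hne : μ + 1 ≠ 1 := ne_of_gt hμ1
  have hμμ1 : μ < μ + 1 := by rw [Ordinal.add_one_eq_succ]; exact Order.lt_succ μ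
  have hSs' : ∀ i, Ss i ∈ Delta0 μ := by
    intro i
    obtain ⟨μi, hμi, hm⟩ := hSs i
    have h1 : (1 : Ordinal.{0}) ≤ μi + 1 := by
      simpa using add_le_add_right (Ordinal.zero_le μi) 1
    have h2 : μi + 1 ≤ μ := by
      rw [Ordinal.add_one_eq_succ]
      exact Order.succ_le_of_lt hμi
    exact delta0_mono h1 h2 hm
  set B : ℕ → Set (ℕ → ℕ) :=
    fun n => {f : ℕ → ℕ | G (List.ofFn fun i : Fin n => chi (Ss i) f) = true} with hBdef
  have hB : ∀ n, B n ∈ Delta0 μ := fun n => Bset_mem_delta0 hμ hSs' n G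
  have hS1 : S = ⋃ N, ⋂ k, B (N + k) := by
    ext f
    simp only [Set.mem_iUnion, Set.mem_iInter]
    constructor
    · intro hf
      obtain ⟨N, hN⟩ := eventually_atTop.mp (hG f)
      exact ⟨N, fun k => Set.mem_setOf_eq ▸ (hN (N + k) (Nat.le_add_right N k)).mpr hf⟩
    · rintro ⟨N, hN⟩
      obtain ⟨M, hM⟩ := eventually_atTop.mp (hG f)
      have h1 := hN (max N M - N)
      rw [Nat.add_sub_cancel' (le_max_left N M)] at h1
      exact (hM (max N M) (le_max_right N M)).mp h1
  have hS2 : Sᶜ = ⋃ N, ⋂ k, (B (N + k))ᶜ := by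
    ext f
    simp only [Set.mem_iUnion, Set.mem_iInter, Set.mem_compl_iff]
    constructor
    · intro hf
      obtain ⟨N, hN⟩ := eventually_atTop.mp (hG f)
      refine ⟨N, fun k hk => hf ?_⟩
      exact (hN (N + k) (Nat.le_add_right N k)).mp hk
    · rintro ⟨N, hN⟩ hf
      obtain ⟨M, hM⟩ := eventually_atTop.mp (hG f)
      have h1 := hN (max N M - N)
      rw [Nat.add_sub_cancel' (le_max_left N M)] at h1
      exact h1 ((hM (max N M) (le_max_right N M)).mpr hf)
  constructor
  · rw [mem_sigma0_iff hne]
    refine ⟨fun N => ⋂ k, B (N + k), hS1, fun N => ⟨μ, hμμ1, hμ, ?_⟩⟩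
    rw [Set.compl_iInter]
    exact sigma0_iUnion hμ fun k => (hB (N + k)).2
  · rw [mem_sigma0_iff hne, hS2]
    refine ⟨fun N => ⋂ k, (B (N + k))ᶜ, rfl, fun N => ⟨μ, hμμ1, hμ, ?_⟩⟩
    rw [Set.compl_iInter]
    refine sigma0_iUnion hμ fun k => ?_
    rw [compl_compl]
    exact (hB (N + k)).1

end Stmt16
namespace Stmt16
open Set Filter

/-! ### Decomposition lemmas -/

lemma pi_decomp {μ : Ordinal.{0}} (hμ : 1 ≤ μ) {t : Set (ℕ → ℕ)} {β : Ordinal.{0}}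
    (h1 : 1 ≤ β) (h2 : β ≤ μ) (h : tᶜ ∈ Sigma0 β) :
    ∃ B : ℕ → Set (ℕ → ℕ), (∀ m, ∃ γ, γ < μ ∧ B m ∈ Delta0 (γ + 1)) ∧ t = ⋂ m, B m := by
  by_cases hb1 : β = 1
  · subst hb1
    rw [sigma0_one] at h
    obtain ⟨C, hC, hCU⟩ := open_eq_iUnion_clopen (show IsOpen tᶜ from h)
    refine ⟨fun m => (C m)ᶜ, fun m => ⟨0, lt_of_lt_of_le zero_lt_one hμ, ?_⟩, ?_⟩
    · rw [zero_add]
      exact isClopen_mem_delta0 (le_refl 1) (hC m).compl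
    · rw [← compl_compl t, hCU, Set.compl_iUnion]
  · rw [mem_sigma0_iff hb1] at h
    obtain ⟨g, hg1, hg2⟩ := h
    refine ⟨fun m => (g m)ᶜ, fun m => ?_, by rw [← compl_compl t, hg1, Set.compl_iUnion]⟩
    obtain ⟨γ, hγβ, hγ1, hγc⟩ := hg2 m
    have hγ1' : (1 : Ordinal.{0}) ≤ γ + 1 := by
      simpa using add_le_add_right (Ordinal.zero_le γ) 1
    have hγsucc : γ ≤ γ + 1 := by
      rw [Ordinal.add_one_eq_succ]; exact le_of_lt (Order.lt_succ γ)
    refine ⟨γ, lt_of_lt_of_le hγβ h2, ?_, ?_⟩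
    · exact sigma0_mono hγ1 hγsucc hγc
    · rw [compl_compl]
      exact compl_mem_sigma0_succ hγ1 hγc

lemma sigma0_succ_decomp {μ : Ordinal.{0}} (hμ : 1 ≤ μ) {S : Set (ℕ → ℕ)}
    (h : S ∈ Sigma0 (μ + 1)) :
    ∃ D : ℕ → ℕ → Set (ℕ → ℕ), (∀ n m, ∃ γ, γ < μ ∧ D n m ∈ Delta0 (γ + 1)) ∧
      S = ⋃ n, ⋂ m, D n m := by
  have hne : μ + 1 ≠ 1 := by
    have : (1 : Ordinal.{0}) < μ + 1 := by
      rw [Ordinal.add_one_eq_succ]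
      exact lt_of_le_of_lt hμ (Order.lt_succ μ)
    exact ne_of_gt this
  rw [mem_sigma0_iff hne] at h
  obtain ⟨g, hg1, hg2⟩ := h
  have key : ∀ n, ∃ B : ℕ → Set (ℕ → ℕ),
      (∀ m, ∃ γ, γ < μ ∧ B m ∈ Delta0 (γ + 1)) ∧ g n = ⋂ m, B m := by
    intro n
    obtain ⟨β, hβ, hβ1, hβc⟩ := hg2 n
    have hβμ : β ≤ μ := by
      rw [Ordinal.add_one_eq_succ] at hβ
      exact Order.le_of_lt_succ hβ
    exact pi_decomp hμ hβ1 hβμ hβc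
  choose D hD1 hD2 using key
  exact ⟨D, hD1, by rw [hg1]; exact Set.iUnion_congr hD2⟩

/-! ### The guesser -/

def aliveP (L : List Bool) (j : ℕ) : Prop :=
  ∀ m, Nat.pair j m < L.length → L.getD (Nat.pair j m) false = true

instance alivePDecidable (L : List Bool) : DecidablePred (aliveP L) := fun j =>
  decidable_of_iff
    (∀ m, m < L.length → Nat.pair j m < L.length → L.getD (Nat.pair j m) false = true)
    ⟨fun h m hm => h m (lt_of_le_of_lt (Nat.right_le_pair j m) hm) hm,
     fun h m _ hm => h m hm⟩

def guess (L : List Bool) : Bool :=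
  if h : ∃ j, j < L.length ∧ aliveP L j then decide (Nat.find h % 2 = 0) else false

lemma getD_ofFn {n : ℕ} (F : Fin n → Bool) {i : ℕ} (h : i < n) (d : Bool) :
    (List.ofFn F).getD i d = F ⟨i, h⟩ := by
  simp [List.getD_eq_getElem?_getD, List.getElem?_ofFn, List.ofFnNthVal, h]

lemma backward {μ : Ordinal.{0}} (hμ : 1 ≤ μ) {S : Set (ℕ → ℕ)}
    (h : S ∈ Delta0 (μ + 1)) : HigherGuessable μ S := by
  classical
  obtain ⟨D, hD, hSeq⟩ := sigma0_succ_decomp hμ h.1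
  obtain ⟨E, hE, hSceq⟩ := sigma0_succ_decomp hμ h.2
  set Ss : ℕ → Set (ℕ → ℕ) := fun i =>
    if i.unpair.1 % 2 = 0 then D (i.unpair.1 / 2) i.unpair.2
    else E (i.unpair.1 / 2) i.unpair.2 with hSsdef
  refine ⟨Ss, ?_, guess, ?_⟩
  · intro i
    by_cases hp : i.unpair.1 % 2 = 0
    · obtain ⟨γ, hγ, hm⟩ := hD (i.unpair.1 / 2) i.unpair.2
      exact ⟨γ, hγ, by rw [hSsdef]; simp only [hp, if_true]; exact hm⟩
    · obtain ⟨γ, hγ, hm⟩ := hE (i.unpair.1 / 2) i.unpair.2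
      exact ⟨γ, hγ, by rw [hSsdef]; simp only [hp, if_false]; exact hm⟩
  · intro f
    have hLlen : ∀ k, (List.ofFn fun i : Fin k => chi (Ss i) f).length = k := by
      intro k; simp
    have hLgetD : ∀ k i, (hik : i < k) →
        (List.ofFn fun i : Fin k => chi (Ss i) f).getD i false = chi (Ss i) f := by
      intro k i hik
      rw [getD_ofFn _ hik false]
    have hTD : ∀ n m, Ss (Nat.pair (2 * n) m) = D n m := by
      intro n m
      have h0 : 2 * n % 2 = 0 := by omega
      have hd : 2 * n / 2 = n := by omega
      rw [hSsdef]
      simp only [Nat.unpair_pair, h0, hd, if_true]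
    have hTE : ∀ n m, Ss (Nat.pair (2 * n + 1) m) = E n m := by
      intro n m
      have h0 : (2 * n + 1) % 2 = 1 := by omega
      have hd : (2 * n + 1) / 2 = n := by omega
      rw [hSsdef]
      simp only [Nat.unpair_pair, h0, hd]
      norm_num
    have hfS : f ∈ S ↔ ∃ n, ∀ m, f ∈ D n m := by
      rw [hSeq]
      simp [Set.mem_iUnion, Set.mem_iInter]
    have hfSc : (f ∉ S) ↔ ∃ n, ∀ m, f ∈ E n m := by
      rw [show (f ∉ S) ↔ f ∈ Sᶜ from Iff.rfl, hSceq]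
      simp [Set.mem_iUnion, Set.mem_iInter]
    have hex : ∃ j, ∀ m, f ∈ Ss (Nat.pair j m) := by
      by_cases hf : f ∈ S
      · obtain ⟨n, hn⟩ := hfS.mp hf
        exact ⟨2 * n, fun m => by rw [hTD]; exact hn m⟩
      · obtain ⟨n, hn⟩ := hfSc.mp hf
        exact ⟨2 * n + 1, fun m => by rw [hTE]; exact hn m⟩
    set c := Nat.find hex with hcdef
    have hc : ∀ m, f ∈ Ss (Nat.pair c m) := Nat.find_spec hex
    have hcmin : ∀ j, j < c → ¬ (∀ m, f ∈ Ss (Nat.pair j m)) :=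
      fun j hj => Nat.find_min hex hj
    have hparity : (c % 2 = 0) ↔ f ∈ S := by
      constructor
      · intro hceven
        have hc2 : 2 * (c / 2) = c := by omega
        refine hfS.mpr ⟨c / 2, fun m => ?_⟩
        have hm := hc m
        rw [← hc2] at hm
        rwa [hTD] at hm
      · intro hfS'
        by_contra hcodd
        have hc2 : 2 * (c / 2) + 1 = c := by omega
        have hEall : ∀ m, f ∈ E (c / 2) m := by
          intro m
          have hm := hc m
          rw [← hc2] at hm
          rwa [hTE] at hm
        exact hfSc.mpr ⟨c / 2, hEall⟩ hfS'
    have hMex : ∀ j, j < c → ∃ m, f ∉ Ss (Nat.pair j m) := by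
      intro j hj
      by_contra hcon
      push_neg at hcon
      exact hcmin j hj hcon
    choose M hM using hMex
    set K := max (c + 1)
      (((Finset.range c).attach.sup fun j =>
        Nat.pair j.1 (M j.1 (Finset.mem_range.mp j.2)) + 1)) with hKdef
    have hpairK : ∀ j, (hj : j < c) → Nat.pair j (M j hj) < K := by
      intro j hj
      have hmem : (⟨j, Finset.mem_range.mpr hj⟩ : {x // x ∈ Finset.range c}) ∈
          (Finset.range c).attach := Finset.mem_attach _ _
      have := Finset.le_sup (f := fun j : {x // x ∈ Finset.range c} =>
        Nat.pair j.1 (M j.1 (Finset.mem_range.mp j.2)) + 1) hmem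
      exact lt_of_lt_of_le (lt_of_lt_of_le (Nat.lt_succ_self _) this) (le_max_right _ _)
    have main : ∀ k, k ≥ K →
        guess (List.ofFn fun i : Fin k => chi (Ss i) f) = decide (c % 2 = 0) := by
      intro k hk
      have hck : c < k :=
        lt_of_lt_of_le (lt_of_lt_of_le (Nat.lt_succ_self c) (le_max_left _ _)) hk
      have halivec : aliveP (List.ofFn fun i : Fin k => chi (Ss i) f) c := by
        intro m hm
        rw [hLlen] at hm
        rw [hLgetD k _ hm]
        simp [chi, hc m]
      have hEx : ∃ j, j < (List.ofFn fun i : Fin k => chi (Ss i) f).length ∧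
          aliveP (List.ofFn fun i : Fin k => chi (Ss i) f) j :=
        ⟨c, by rw [hLlen]; exact hck, halivec⟩
      rw [guess]
      rw [dif_pos hEx]
      have hfind : Nat.find hEx = c := by
        rw [Nat.find_eq_iff]
        refine ⟨⟨by rw [hLlen]; exact hck, halivec⟩, ?_⟩
        rintro j hj ⟨hjk, halj⟩
        have hpair : Nat.pair j (M j hj) < k := lt_of_lt_of_le (hpairK j hj) hk
        have hval := halj (M j hj) (by rw [hLlen]; exact hpair)
        rw [hLgetD k _ hpair] at hval
        simp [chi, hM j hj] at hval
      rw [hfind]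
    rw [eventually_atTop]
    refine ⟨K, fun k hk => ?_⟩
    rw [main k hk]
    simp [hparity]

end Stmt16
theorem stmt16 (μ : Ordinal.{0}) (h1 : 1 ≤ μ) (h2 : μ < (Cardinal.aleph 1).ord)
    (S : Set (ℕ → ℕ)) : HigherGuessable μ S ↔ S ∈ Delta0 (μ + 1) :=
  ⟨fun h => Stmt16.forward h1 h, fun h => Stmt16.backward h1 h⟩
end
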